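/- Let T and S be monads on the category Type u of sets. The forgetful functor from the category TAlg(T,S) of (T,S)-tensor algebras to Type u has a left adjoint (equivalently, the possibly spurious tensor T ⊗ S exists) if and only if for every cardinal α there is a cardinal bounding the cardinalities of the carriers of all α-reachable (T,S)-tensor algebras. -/

import Mathlib

open CategoryTheory

universe u

/-- A `(T,S)`-tensor algebra: a set with Eilenberg–Moore algebra structures for both
monads, satisfying the tensor law. -/
structure TensorAlg (T S : Monad (Type u)) where
  carrier : Type u
  α : T.obj carrier → carrier
  β : S.obj carrier → carrier
  α_unit : ∀ x : carrier, α (T.η.app carrier x) = x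
  α_mul : ∀ m : T.obj (T.obj carrier), α (T.μ.app carrier m) = α (T.map (TypeCat.ofHom α) m)
  β_unit : ∀ x : carrier, β (S.η.app carrier x) = x
  β_mul : ∀ m : S.obj (S.obj carrier), β (S.μ.app carrier m) = β (S.map (TypeCat.ofHom β) m)
  tensor_law : ∀ {Y Z : Type u} (p : T.obj Y) (q : S.obj Z) (f : Y × Z → carrier),
    α (T.map (TypeCat.ofHom (fun y => β (S.map (TypeCat.ofHom (fun z => f (y, z))) q))) p) =
      β (S.map (TypeCat.ofHom (fun z => α (T.map (TypeCat.ofHom (fun y => f (y, z))) p))) q)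

/-- Morphisms of tensor algebras: maps homomorphic for both structures. -/
@[ext]
structure TensorAlgHom {T S : Monad (Type u)} (A B : TensorAlg T S) where
  toFun : A.carrier → B.carrier
  map_α : ∀ m : T.obj A.carrier, toFun (A.α m) = B.α (T.map (TypeCat.ofHom toFun) m)
  map_β : ∀ m : S.obj A.carrier, toFun (A.β m) = B.β (S.map (TypeCat.ofHom toFun) m)

instance TensorAlg.instCategory {T S : Monad (Type u)} : Category (TensorAlg T S) where
  Hom A B := TensorAlgHom A B
  id A :=
    { toFun := id
      map_α := fun m => by
        show A.α m = A.α (T.map (𝟙 A.carrier) m)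
        rw [Functor.map_id_apply]
      map_β := fun m => by
        show A.β m = A.β (S.map (𝟙 A.carrier) m)
        rw [Functor.map_id_apply] }
  comp {A B C} f g :=
    { toFun := g.toFun ∘ f.toFun
      map_α := fun m => by
        show g.toFun (f.toFun (A.α m)) = C.α (T.map (TypeCat.ofHom (g.toFun ∘ f.toFun)) m)
        rw [f.map_α, g.map_α]
        congr 1
        exact (FunctorToTypes.map_comp_apply T.toFunctor (TypeCat.ofHom f.toFun) (TypeCat.ofHom g.toFun) m).symm
      map_β := fun m => by
        show g.toFun (f.toFun (A.β m)) = C.β (S.map (TypeCat.ofHom (g.toFun ∘ f.toFun)) m)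
        rw [f.map_β, g.map_β]
        congr 1
        exact (FunctorToTypes.map_comp_apply S.toFunctor (TypeCat.ofHom f.toFun) (TypeCat.ofHom g.toFun) m).symm }
  id_comp f := by apply TensorAlgHom.ext; rfl
  comp_id f := by apply TensorAlgHom.ext; rfl
  assoc f g h := by apply TensorAlgHom.ext; rfl

/-- The forgetful functor from `(T,S)`-tensor algebras to sets. -/
def forgetTAlg (T S : Monad (Type u)) : TensorAlg T S ⥤ Type u where
  obj A := A.carrier
  map f := TypeCat.ofHom (TensorAlgHom.toFun f)
  map_id _ := rfl
  map_comp _ _ := rfl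


/-- A subset of the carrier of a tensor algebra is closed if it is closed under both
algebra structures. -/
def TensorAlg.Closed {T S : Monad (Type u)} (A : TensorAlg T S) (s : Set A.carrier) : Prop :=
  (∀ m : T.obj s, A.α (T.map (TypeCat.ofHom (Subtype.val : s → A.carrier)) m) ∈ s) ∧
    (∀ m : S.obj s, A.β (S.map (TypeCat.ofHom (Subtype.val : s → A.carrier)) m) ∈ s)

/-- A tensor algebra is generated by `X` if the only closed subset containing `X` is
the whole carrier. -/
def TensorAlg.GeneratedBy {T S : Monad (Type u)} (A : TensorAlg T S)
    (X : Set A.carrier) : Prop :=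
  ∀ s : Set A.carrier, A.Closed s → X ⊆ s → s = Set.univ

/-- A tensor algebra is `c`-reachable if it is generated by a subset of cardinality
at most `c`. -/
def TensorAlg.Reachable {T S : Monad (Type u)} (A : TensorAlg T S)
    (c : Cardinal.{u}) : Prop :=
  ∃ X : Set A.carrier, Cardinal.mk X ≤ c ∧ A.GeneratedBy X

/-! ### Auxiliary machinery -/

section Helpers
lemma Mnd.map_map (T : Monad (Type u)) {X Y Z : Type u} (f : X → Y) (g : Y → Z) (m : T.obj X) :
    T.map (↾g) (T.map (↾f) m) = T.map (↾(fun x => g (f x))) m := by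
  rw [← Functor.map_comp_apply]; rfl
lemma Mnd.eta_nat (T : Monad (Type u)) {X Y : Type u} (f : X → Y) (x : X) :
    T.η.app Y (f x) = T.map (↾f) (T.η.app X x) := ConcreteCategory.congr_hom (T.η.naturality (↾f)) x
lemma Mnd.mu_nat (T : Monad (Type u)) {X Y : Type u} (f : X → Y) (m : T.obj (T.obj X)) :
    T.μ.app Y (T.map (↾⇑(T.map (↾f))) m) = T.map (↾f) (T.μ.app X m) :=
  ConcreteCategory.congr_hom (T.μ.naturality (↾f)) m
end Helpers

namespace TensorAlg
variable {T S : Monad (Type u)}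

/-- subalgebra on a closed subset -/
def sub (A : TensorAlg T S) (s : Set A.carrier) (hs : A.Closed s) : TensorAlg T S where
  carrier := s
  α m := ⟨A.α (T.map (↾Subtype.val) m), hs.1 m⟩
  β m := ⟨A.β (S.map (↾Subtype.val) m), hs.2 m⟩
  α_unit x := by
    apply Subtype.ext
    show A.α (T.map (↾Subtype.val) (T.η.app _ x)) = (x : A.carrier)
    rw [← Mnd.eta_nat, A.α_unit]
  β_unit x := by
    apply Subtype.ext
    show A.β (S.map (↾Subtype.val) (S.η.app _ x)) = (x : A.carrier)
    rw [← Mnd.eta_nat, A.β_unit]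
  α_mul m := by
    apply Subtype.ext
    show A.α (T.map (↾Subtype.val) (T.μ.app _ m)) = A.α (T.map (↾Subtype.val) (T.map (↾_) m))
    rw [← Mnd.mu_nat, A.α_mul, Mnd.map_map, Mnd.map_map]
  β_mul m := by
    apply Subtype.ext
    show A.β (S.map (↾Subtype.val) (S.μ.app _ m)) = A.β (S.map (↾Subtype.val) (S.map (↾_) m))
    rw [← Mnd.mu_nat, A.β_mul, Mnd.map_map, Mnd.map_map]
  tensor_law p q f := by
    apply Subtype.ext
    show A.α (T.map (↾Subtype.val) (T.map (↾_) p)) = A.β (S.map (↾Subtype.val) (S.map (↾_) q))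
    simp only [Mnd.map_map]
    exact A.tensor_law p q (fun yz => (f yz : A.carrier))

/-- transport along an equivalence -/
def congrE (A : TensorAlg T S) {B : Type u} (e : A.carrier ≃ B) : TensorAlg T S where
  carrier := B
  α m := e (A.α (T.map (↾e.symm) m))
  β m := e (A.β (S.map (↾e.symm) m))
  α_unit x := by
    show e (A.α (T.map (↾e.symm) (T.η.app B x))) = x
    rw [← Mnd.eta_nat, A.α_unit, e.apply_symm_apply]
  β_unit x := by
    show e (A.β (S.map (↾e.symm) (S.η.app B x))) = x
    rw [← Mnd.eta_nat, A.β_unit, e.apply_symm_apply]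
  α_mul m := by
    show e (A.α (T.map (↾e.symm) (T.μ.app B m)))
        = e (A.α (T.map (↾e.symm) (T.map (↾(fun m => e (A.α (T.map (↾e.symm) m)))) m)))
    rw [← Mnd.mu_nat, A.α_mul]
    simp only [Mnd.map_map, e.symm_apply_apply]
  β_mul m := by
    show e (A.β (S.map (↾e.symm) (S.μ.app B m)))
        = e (A.β (S.map (↾e.symm) (S.map (↾(fun m => e (A.β (S.map (↾e.symm) m)))) m)))
    rw [← Mnd.mu_nat, A.β_mul]
    simp only [Mnd.map_map, e.symm_apply_apply]
  tensor_law p q f := by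
    show e (A.α (T.map (↾e.symm) (T.map (↾(fun y => e (A.β (S.map (↾e.symm) (S.map (↾(fun z => f (y, z))) q))))) p)))
        = e (A.β (S.map (↾e.symm) (S.map (↾(fun z => e (A.α (T.map (↾e.symm) (T.map (↾(fun y => f (y, z))) p))))) q)))
    simp only [Mnd.map_map, e.symm_apply_apply]
    congr 1
    exact A.tensor_law p q (fun yz => e.symm (f yz))

/-- intersection of closed sets is closed -/
lemma closed_sInter (A : TensorAlg T S) (C : Set (Set A.carrier)) (hC : ∀ s ∈ C, A.Closed s) :
    A.Closed (⋂₀ C) := by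
  constructor
  · intro m
    rw [Set.mem_sInter]
    intro s hs
    have h1 : T.map (↾(Subtype.val : (⋂₀ C : Set A.carrier) → A.carrier)) m
        = T.map (↾(Subtype.val : s → A.carrier))
            (T.map (↾(fun x : (⋂₀ C : Set A.carrier) => (⟨x.1, x.2 s hs⟩ : s))) m) := by
      rw [Mnd.map_map]
    rw [h1]
    exact (hC s hs).1 _
  · intro m
    rw [Set.mem_sInter]
    intro s hs
    have h1 : S.map (↾(Subtype.val : (⋂₀ C : Set A.carrier) → A.carrier)) m
        = S.map (↾(Subtype.val : s → A.carrier))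
            (S.map (↾(fun x : (⋂₀ C : Set A.carrier) => (⟨x.1, x.2 s hs⟩ : s))) m) := by
      rw [Mnd.map_map]
    rw [h1]
    exact (hC s hs).2 _

end TensorAlg

/-! ### Limits in the category of tensor algebras -/

namespace TensorAlgLim
open CategoryTheory.Limits

variable {T S : Monad (Type u)} {J : Type u} [Category.{u} J] (F : J ⥤ TensorAlg T S)

abbrev Secs := ((F ⋙ forgetTAlg T S).sections : Type u)

def proj (j : J) : Secs F → (F.obj j).carrier := fun x => x.1 j

lemma proj_nat {j j' : J} (f : j ⟶ j') (x : Secs F) :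
    (F.map f).toFun (proj F j x) = proj F j' x := x.2 f

def ptα : T.obj (Secs F) → Secs F := fun m =>
  ⟨fun j => (F.obj j).α (T.map (↾(proj F j)) m), by
    intro j j' f
    show (F.map f).toFun ((F.obj j).α (T.map (↾(proj F j)) m)) = (F.obj j').α (T.map (↾(proj F j')) m)
    rw [(F.map f).map_α, Mnd.map_map]
    have h1 : (fun x => (F.map f).toFun (proj F j x)) = proj F j' := funext fun x => x.2 f
    rw [h1]⟩

def ptβ : S.obj (Secs F) → Secs F := fun m =>
  ⟨fun j => (F.obj j).β (S.map (↾(proj F j)) m), by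
    intro j j' f
    show (F.map f).toFun ((F.obj j).β (S.map (↾(proj F j)) m)) = (F.obj j').β (S.map (↾(proj F j')) m)
    rw [(F.map f).map_β, Mnd.map_map]
    have h1 : (fun x => (F.map f).toFun (proj F j x)) = proj F j' := funext fun x => x.2 f
    rw [h1]⟩

lemma proj_ptα (j : J) (m : T.obj (Secs F)) :
    proj F j (ptα F m) = (F.obj j).α (T.map (↾(proj F j)) m) := rfl

lemma proj_ptβ (j : J) (m : S.obj (Secs F)) :
    proj F j (ptβ F m) = (F.obj j).β (S.map (↾(proj F j)) m) := rfl

def pt : TensorAlg T S where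
  carrier := Secs F
  α := ptα F
  β := ptβ F
  α_unit x := by
    apply Subtype.ext; funext j
    show (F.obj j).α (T.map (↾(proj F j)) (T.η.app _ x)) = proj F j x
    rw [← Mnd.eta_nat, (F.obj j).α_unit]
  β_unit x := by
    apply Subtype.ext; funext j
    show (F.obj j).β (S.map (↾(proj F j)) (S.η.app _ x)) = proj F j x
    rw [← Mnd.eta_nat, (F.obj j).β_unit]
  α_mul m := by
    apply Subtype.ext; funext j
    show (F.obj j).α (T.map (↾(proj F j)) (T.μ.app _ m))
        = (F.obj j).α (T.map (↾(proj F j)) (T.map (↾(ptα F)) m))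
    rw [← Mnd.mu_nat, (F.obj j).α_mul]
    simp only [Mnd.map_map, proj_ptα]
  β_mul m := by
    apply Subtype.ext; funext j
    show (F.obj j).β (S.map (↾(proj F j)) (S.μ.app _ m))
        = (F.obj j).β (S.map (↾(proj F j)) (S.map (↾(ptβ F)) m))
    rw [← Mnd.mu_nat, (F.obj j).β_mul]
    simp only [Mnd.map_map, proj_ptβ]
  tensor_law p q f := by
    apply Subtype.ext; funext j
    show (F.obj j).α (T.map (↾(proj F j)) (T.map (↾(fun y => ptβ F (S.map (↾(fun z => f (y, z))) q))) p))
        = (F.obj j).β (S.map (↾(proj F j)) (S.map (↾(fun z => ptα F (T.map (↾(fun y => f (y, z))) p))) q))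
    simp only [Mnd.map_map, proj_ptβ, proj_ptα]
    exact (F.obj j).tensor_law p q (fun yz => proj F j (f yz))

def cone : Cone F where
  pt := pt F
  π :=
    { app := fun j =>
        { toFun := proj F j
          map_α := fun m => proj_ptα F j m
          map_β := fun m => proj_ptβ F j m }
      naturality := fun j j' f => by
        apply TensorAlgHom.ext
        funext x
        exact (x.2 f).symm }

def isLimit : IsLimit (cone F) where
  lift s :=
    { toFun := fun x => ⟨fun j => (s.π.app j).toFun x,
        fun {j j'} f => congrFun (congrArg TensorAlgHom.toFun (s.w f)) x⟩
      map_α := fun m => by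
        apply Subtype.ext; funext j
        show (s.π.app j).toFun (s.pt.α m) = proj F j (ptα F (T.map (↾_) m))
        refine ((s.π.app j).map_α m).trans ?_
        rw [proj_ptα, Mnd.map_map]
        exact rfl
      map_β := fun m => by
        apply Subtype.ext; funext j
        show (s.π.app j).toFun (s.pt.β m) = proj F j (ptβ F (S.map (↾_) m))
        refine ((s.π.app j).map_β m).trans ?_
        rw [proj_ptβ, Mnd.map_map]
        exact rfl }
  fac s j := by apply TensorAlgHom.ext; rfl
  uniq s m w := by
    apply TensorAlgHom.ext
    funext x
    apply Subtype.ext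
    funext j
    exact congrFun (congrArg TensorAlgHom.toFun (w j)) x

def mappedIsLimit : IsLimit ((forgetTAlg T S).mapCone (cone F)) where
  lift s := ↾(fun x => ⟨fun j => s.π.app j x, fun {j j'} f => ConcreteCategory.congr_hom (s.w f) x⟩)
  fac s j := rfl
  uniq s m w := by
    apply TypeCat.homEquiv.injective; funext x
    apply Subtype.ext
    funext j
    exact ConcreteCategory.congr_hom (w j) x

end TensorAlgLim

instance {T S : Monad (Type u)} : Limits.HasLimits (TensorAlg T S) :=
  ⟨fun _ _ => ⟨fun F => Limits.HasLimit.mk ⟨TensorAlgLim.cone F, TensorAlgLim.isLimit F⟩⟩⟩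

instance {T S : Monad (Type u)} : Limits.PreservesLimits (forgetTAlg T S) :=
  ⟨fun {_} _ => ⟨fun {F} => Limits.preservesLimit_of_preserves_limit_cone
    (TensorAlgLim.isLimit F) (TensorAlgLim.mappedIsLimit F)⟩⟩

/-! ### Homomorphism constructions -/

namespace TensorAlg
variable {T S : Monad (Type u)}

/-- The inclusion of a subalgebra. -/
def subHom (A : TensorAlg T S) (s : Set A.carrier) (hs : A.Closed s) : (A.sub s hs) ⟶ A where
  toFun := Subtype.val
  map_α _ := rfl
  map_β _ := rfl

/-- The range of a homomorphism is closed. -/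
lemma closed_range {A B : TensorAlg T S} (h : A ⟶ B) :
    B.Closed (Set.range h.toFun) := by
  have key : (Subtype.val : Set.range h.toFun → B.carrier)
      = fun y => h.toFun (Set.rangeSplitting h.toFun y) :=
    funext fun y => (Set.apply_rangeSplitting h.toFun y).symm
  constructor
  · intro m
    rw [key]
    have : T.map (↾(fun y => h.toFun (Set.rangeSplitting h.toFun y))) m
        = T.map (↾h.toFun) (T.map (↾(Set.rangeSplitting h.toFun)) m) := by rw [Mnd.map_map]
    rw [this, ← h.map_α]
    exact ⟨_, rfl⟩
  · intro m
    rw [key]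
    have : S.map (↾(fun y => h.toFun (Set.rangeSplitting h.toFun y))) m
        = S.map (↾h.toFun) (S.map (↾(Set.rangeSplitting h.toFun)) m) := by rw [Mnd.map_map]
    rw [this, ← h.map_β]
    exact ⟨_, rfl⟩

end TensorAlg

/-! ### Forward direction -/

lemma forward_dir {T S : Monad (Type u)}
    (F : Type u ⥤ TensorAlg T S) (adj : F ⊣ forgetTAlg T S) (c : Cardinal.{u}) :
    ∀ A : TensorAlg T S, A.Reachable c →
      Cardinal.mk A.carrier ≤ Cardinal.mk (F.obj c.out).carrier := by
  classical
  rintro A ⟨X, hXc, hgen⟩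
  by_cases hA : Nonempty A.carrier
  · have h1 : Cardinal.mk X ≤ Cardinal.mk c.out := by rw [Cardinal.mk_out]; exact hXc
    obtain ⟨f⟩ := (Cardinal.le_def _ _).mp h1
    let g : c.out → A.carrier := fun k =>
      if hk : ∃ x : X, f x = k then (hk.choose : X).1 else Classical.choice hA
    have hXg : X ⊆ Set.range g := by
      intro x hx
      refine ⟨f ⟨x, hx⟩, ?_⟩
      have hk : ∃ x' : X, f x' = f ⟨x, hx⟩ := ⟨⟨x, hx⟩, rfl⟩
      have h2 : hk.choose = ⟨x, hx⟩ := f.injective hk.choose_spec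
      show (if hk' : ∃ x' : X, f x' = f ⟨x, hx⟩ then _ else _) = x
      rw [dif_pos hk]
      exact congrArg Subtype.val h2
    let hom : F.obj c.out ⟶ A := (adj.homEquiv c.out A).symm (↾g)
    have hg : g = ⇑(adj.unit.app c.out ≫ (forgetTAlg T S).map hom) := by
      have := (adj.homEquiv c.out A).apply_symm_apply (↾g)
      rw [Adjunction.homEquiv_unit] at this
      exact congrArg TypeCat.homEquiv this.symm
    have hsub : X ⊆ Set.range hom.toFun := by
      intro x hx
      obtain ⟨k, hk⟩ := hXg hx
      exact ⟨adj.unit.app c.out k, by rw [hg] at hk; exact hk⟩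
    have huniv := hgen _ (TensorAlg.closed_range hom) hsub
    have hsurj : Function.Surjective hom.toFun := by
      intro a
      have : a ∈ Set.range hom.toFun := huniv ▸ Set.mem_univ a
      exact this
    exact Cardinal.mk_le_of_surjective hsurj
  · haveI : IsEmpty A.carrier := not_nonempty_iff.mp hA
    rw [Cardinal.mk_eq_zero]
    exact zero_le

/-! ### Backward direction: solution set condition -/

namespace TensorAlg
variable {T S : Monad (Type u)}

/-- Inverse hom for transport along an equivalence. -/
def congrEHomInv (A : TensorAlg T S) {B : Type u} (e : A.carrier ≃ B) : (A.congrE e) ⟶ A where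
  toFun := e.symm
  map_α m := e.symm_apply_apply _
  map_β m := e.symm_apply_apply _

/-- Any map from `X` to an algebra factors through a `#X`-reachable algebra. -/
lemma exists_factor (D : TensorAlg T S) {X : Type u} (h : X → D.carrier) :
    ∃ (A : TensorAlg T S) (fA : X → A.carrier) (g : A ⟶ D),
      A.Reachable (Cardinal.mk X) ∧ ∀ x, g.toFun (fA x) = h x := by
  have hM : D.Closed (⋂₀ {s | D.Closed s ∧ Set.range h ⊆ s}) :=
    D.closed_sInter _ (fun s hs => hs.1)
  have hs₀M : Set.range h ⊆ ⋂₀ {s | D.Closed s ∧ Set.range h ⊆ s} :=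
    fun a ha => Set.mem_sInter.mpr fun s hs => hs.2 ha
  refine ⟨D.sub _ hM, fun x => ⟨h x, hs₀M ⟨x, rfl⟩⟩, D.subHom _ hM,
    ⟨Subtype.val ⁻¹' Set.range h, ?_, ?_⟩, fun x => rfl⟩
  · -- cardinality bound on the generating set
    have hsurj : Function.Surjective
        (fun x : X => (⟨⟨h x, hs₀M ⟨x, rfl⟩⟩, ⟨x, rfl⟩⟩ :
          (Subtype.val ⁻¹' Set.range h : Set (D.sub _ hM).carrier))) := by
      rintro ⟨⟨a, haM⟩, has₀⟩
      obtain ⟨x, hx⟩ := has₀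
      exact ⟨x, by apply Subtype.ext; apply Subtype.ext; exact hx⟩
    exact Cardinal.mk_le_of_surjective hsurj
  · -- generation
    intro t ht hsub
    have ht' : D.Closed (Subtype.val '' t) := by
      constructor
      · intro m
        have key : T.map (↾(Subtype.val : (Subtype.val '' t : Set D.carrier) → D.carrier)) m
            = T.map (↾(Subtype.val : (⋂₀ {s | D.Closed s ∧ Set.range h ⊆ s} : Set D.carrier) → D.carrier))
                (T.map (↾(Subtype.val : t → (D.sub _ hM).carrier))
                  (T.map (↾(fun y : (Subtype.val '' t : Set D.carrier) =>
                    (⟨y.2.choose, y.2.choose_spec.1⟩ : t))) m)) := by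
          erw [Mnd.map_map, Mnd.map_map]
          exact congrArg (fun f => T.map (↾f) m) (funext fun y => (y.2.choose_spec.2).symm)
        rw [key]
        exact ⟨(D.sub _ hM).α (T.map (↾(Subtype.val : t → (D.sub _ hM).carrier))
          (T.map (↾(fun y : (Subtype.val '' t : Set D.carrier) =>
            (⟨y.2.choose, y.2.choose_spec.1⟩ : t))) m)), ht.1 _, rfl⟩
      · intro m
        have key : S.map (↾(Subtype.val : (Subtype.val '' t : Set D.carrier) → D.carrier)) m
            = S.map (↾(Subtype.val : (⋂₀ {s | D.Closed s ∧ Set.range h ⊆ s} : Set D.carrier) → D.carrier))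
                (S.map (↾(Subtype.val : t → (D.sub _ hM).carrier))
                  (S.map (↾(fun y : (Subtype.val '' t : Set D.carrier) =>
                    (⟨y.2.choose, y.2.choose_spec.1⟩ : t))) m)) := by
          erw [Mnd.map_map, Mnd.map_map]
          exact congrArg (fun f => S.map (↾f) m) (funext fun y => (y.2.choose_spec.2).symm)
        rw [key]
        exact ⟨(D.sub _ hM).β (S.map (↾(Subtype.val : t → (D.sub _ hM).carrier))
          (S.map (↾(fun y : (Subtype.val '' t : Set D.carrier) =>
            (⟨y.2.choose, y.2.choose_spec.1⟩ : t))) m)), ht.2 _, rfl⟩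
    have hs₀t' : Set.range h ⊆ Subtype.val '' t := fun a ha => ⟨⟨a, hs₀M ha⟩, hsub ha, rfl⟩
    have hMt' : ⋂₀ {s | D.Closed s ∧ Set.range h ⊆ s} ⊆ Subtype.val '' t :=
      Set.sInter_subset_of_mem ⟨ht', hs₀t'⟩
    rw [Set.eq_univ_iff_forall]
    intro x
    obtain ⟨z, hz, hzx⟩ := hMt' x.2
    have hzx' : z = x := Subtype.ext hzx
    rwa [← hzx']

end TensorAlg

/-! ### The solution set condition -/

/-- A bundled tensor-algebra structure on a fixed carrier (small type). -/
structure AlgStruct (T S : Monad (Type u)) (c : Type u) where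
  aα : T.obj c → c
  aβ : S.obj c → c
  hαu : ∀ x, aα (T.η.app c x) = x
  hαm : ∀ m, aα (T.μ.app c m) = aα (T.map (↾aα) m)
  hβu : ∀ x, aβ (S.η.app c x) = x
  hβm : ∀ m, aβ (S.μ.app c m) = aβ (S.map (↾aβ) m)
  htl : ∀ (Y Z : Type u) (p : T.obj Y) (q : S.obj Z) (f : Y × Z → c),
    aα (T.map (↾(fun y => aβ (S.map (↾(fun z => f (y, z))) q))) p) =
      aβ (S.map (↾(fun z => aα (T.map (↾(fun y => f (y, z))) p))) q)

def AlgStruct.toAlg {T S : Monad (Type u)} {c : Type u} (p : AlgStruct T S c) : TensorAlg T S :=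
  ⟨c, p.aα, p.aβ, p.hαu, p.hαm, p.hβu, p.hβm, fun {Y Z} pp q f => p.htl Y Z pp q f⟩

def TensorAlg.struct {T S : Monad (Type u)} (A : TensorAlg T S) : AlgStruct T S A.carrier :=
  ⟨A.α, A.β, A.α_unit, A.α_mul, A.β_unit, A.β_mul, fun Y Z pp q f => A.tensor_law pp q f⟩

lemma small_factor {T S : Monad (Type u)} {X K : Type u}
    (hbK : ∀ A : TensorAlg T S, A.Reachable (Cardinal.mk X) →
      Cardinal.mk A.carrier ≤ Cardinal.mk K)
    (D : TensorAlg T S) (h : X → D.carrier) :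
    ∃ (s : Set K) (p : AlgStruct T S s) (fA : X → s) (g : p.toAlg ⟶ D),
      ∀ x, g.toFun (fA x) = h x := by
  obtain ⟨A, fA, g, hreach, hfac⟩ := TensorAlg.exists_factor D h
  obtain ⟨j⟩ := (Cardinal.le_def _ _).mp (hbK A hreach)
  refine ⟨Set.range ⇑j, (A.congrE (Equiv.ofInjective ⇑j j.injective)).struct,
    fun x => (Equiv.ofInjective ⇑j j.injective) (fA x),
    TensorAlg.congrEHomInv A (Equiv.ofInjective ⇑j j.injective) ≫ g, ?_⟩
  intro x
  show g.toFun ((Equiv.ofInjective ⇑j j.injective).symm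
    ((Equiv.ofInjective ⇑j j.injective) (fA x))) = h x
  rw [Equiv.symm_apply_apply]
  exact hfac x

lemma tAlg_solution_set {T S : Monad (Type u)}
    (hb : ∀ c : Cardinal.{u}, ∃ b : Cardinal.{u},
      ∀ A : TensorAlg T S, A.Reachable c → Cardinal.mk A.carrier ≤ b) :
    SolutionSetCondition.{u} (forgetTAlg T S) := by
  intro X
  obtain ⟨b, hbX⟩ := hb (Cardinal.mk X)
  have hbK : ∀ A : TensorAlg T S, A.Reachable (Cardinal.mk X) →
      Cardinal.mk A.carrier ≤ Cardinal.mk b.out := fun A hA => by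
    rw [Cardinal.mk_out]; exact hbX A hA
  refine ⟨Σ s : Set b.out, AlgStruct T S s × (X → s),
    fun i => i.2.1.toAlg, fun i => ↾i.2.2, ?_⟩
  intro D h
  obtain ⟨s, p, fA, g, hfac⟩ := small_factor hbK D ⇑h
  exact ⟨⟨s, p, fA⟩, g, by apply TypeCat.homEquiv.injective; exact funext hfac⟩

/-- Corollary 3.8: the (possibly spurious) tensor `T ⊗ S` exists, i.e. the forgetful
functor from `(T,S)`-tensor algebras has a left adjoint, iff for every cardinal `c`
the cardinalities of `c`-reachable tensor algebras are bounded. -/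
theorem tensor_exists_iff_reachable_bounded (T S : Monad (Type u)) :
    (∃ F : Type u ⥤ TensorAlg T S, Nonempty (F ⊣ forgetTAlg T S)) ↔
      ∀ c : Cardinal.{u}, ∃ b : Cardinal.{u},
        ∀ A : TensorAlg T S, A.Reachable c → Cardinal.mk A.carrier ≤ b := by
  constructor
  · rintro ⟨F, ⟨adj⟩⟩ c
    exact ⟨Cardinal.mk (F.obj c.out).carrier, forward_dir F adj c⟩
  · intro hb
    haveI := isRightAdjoint_of_preservesLimits_of_solutionSetCondition
      (forgetTAlg T S) (tAlg_solution_set hb)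
    exact ⟨(forgetTAlg T S).leftAdjoint, ⟨Adjunction.ofIsRightAdjoint _⟩⟩
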